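/- arXiv:2310.04851 — 2 statements merged into one kernel-verified Lean document; each statement's English description precedes it below -/
import Mathlib

section
/- Let G and H be connected finite simple graphs with n₁ and n₂ vertices respectively. Then the star chromatic number of their tensor product satisfies χ_s(G × H) ≤ min{n₁ · χ_s(H), n₂ · χ_s(G)}. -/
/-- The tensor (categorical) product of two simple graphs: `(u,v)` and `(u',v')` are
adjacent iff `u` is adjacent to `u'` in `G` and `v` is adjacent to `v'` in `H`. -/
def SimpleGraph.tensorProd {α β : Type*} (G : SimpleGraph α) (H : SimpleGraph β) :
    SimpleGraph (α × β) where
  Adj x y := G.Adj x.1 y.1 ∧ H.Adj x.2 y.2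
  symm := ⟨fun _ _ h => ⟨h.1.symm, h.2.symm⟩⟩
  loopless := ⟨fun x h => G.irrefl h.1⟩

/-- A star coloring of `G` with colors in `Fin n`: a proper coloring such that every
path on four vertices (i.e. of length three) uses at least three distinct colors. -/
def SimpleGraph.IsStarColoring {α : Type*} (G : SimpleGraph α) {n : ℕ} (f : α → Fin n) : Prop :=
  (∀ ⦃u v : α⦄, G.Adj u v → f u ≠ f v) ∧
  ∀ (u v : α) (p : G.Walk u v), p.IsPath → p.length = 3 →
    3 ≤ (p.support.map f).toFinset.card

/-- The star chromatic number of `G`: the least number of colors in a star coloring. -/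
noncomputable def SimpleGraph.starChromaticNumber {α : Type*} (G : SimpleGraph α) : ℕ :=
  sInf {n : ℕ | ∃ f : α → Fin n, G.IsStarColoring f}

open SimpleGraph

lemma isStarColoring_of_injective {α : Type*} (G : SimpleGraph α) {n : ℕ} (f : α → Fin n)
    (hf : Function.Injective f) : G.IsStarColoring f := by
  constructor
  · intro u v h he; exact h.ne (hf he)
  · intro u v p hp hl
    have hnd : (p.support.map f).Nodup := hp.support_nodup.map hf
    rw [List.toFinset_card_of_nodup hnd, List.length_map, SimpleGraph.Walk.length_support, hl]
    omega

lemma card_three_le {m : ℕ} {x y z : Fin m} {s : Finset (Fin m)} (hx : x ∈ s) (hy : y ∈ s)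
    (hz : z ∈ s) (hxy : x ≠ y) (hyz : y ≠ z) (hxz : x ≠ z) : 3 ≤ s.card := by
  have hsub : ({x, y, z} : Finset (Fin m)) ⊆ s := by
    intro a ha; simp at ha; rcases ha with h|h|h <;> subst h <;> assumption
  have h3 : ({x, y, z} : Finset (Fin m)).card = 3 := by
    rw [Finset.card_insert_of_notMem (by simp [hxy, hxz]),
      Finset.card_insert_of_notMem (by simp [hyz]), Finset.card_singleton]
  calc 3 = ({x, y, z} : Finset (Fin m)).card := h3.symm
    _ ≤ s.card := Finset.card_le_card hsub

lemma tensor_star_aux {α β : Type*} [Fintype α] {G : SimpleGraph α} {H : SimpleGraph β}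
    {n : ℕ} {f : β → Fin n} (hf : H.IsStarColoring f) :
    ∃ g : α × β → Fin (Fintype.card α * n), (G.tensorProd H).IsStarColoring g := by
  set e := Fintype.equivFin α with he
  set g : α × β → Fin (Fintype.card α * n) :=
    fun x => finProdFinEquiv (e x.1, f x.2) with hg
  have key : ∀ x y : α × β, g x = g y → x.1 = y.1 ∧ f x.2 = f y.2 := by
    intro x y h
    have h2 := finProdFinEquiv.injective h
    exact ⟨e.injective (congrArg Prod.fst h2), congrArg Prod.snd h2⟩
  have proper : ∀ ⦃x y : α × β⦄, (G.tensorProd H).Adj x y → g x ≠ g y := by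
    intro x y h hc
    exact hf.1 h.2 (key x y hc).2
  refine ⟨g, proper, ?_⟩
  intro u v p hp hl
  cases p with
  | nil => simp at hl
  | cons h1 q =>
    cases q with
    | nil => simp at hl
    | cons h2 q =>
      cases q with
      | nil => simp at hl
      | cons h3 q =>
        cases q with
        | cons h4 q => simp [Walk.length_cons] at hl
        | nil =>
          rename_i b c
          -- walk u → b → c → v
          simp only [Walk.support_cons, Walk.support_nil, List.map_cons, List.map_nil]
          have hnd := hp.support_nodup
          simp only [Walk.support_cons, Walk.support_nil, List.nodup_cons, List.mem_cons,
            List.mem_singleton, List.not_mem_nil, or_false, not_or] at hnd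
          obtain ⟨⟨hub, huc, huv⟩, ⟨hbc, hbv⟩, hcv, -⟩ := hnd
          have hgub : g u ≠ g b := proper h1
          have hgbc : g b ≠ g c := proper h2
          have hgcv : g c ≠ g v := proper h3
          by_cases hguc : g u = g c
          · by_cases hgbv : g b = g v
            · -- contradiction via H path
              exfalso
              obtain ⟨huc1, hfuc⟩ := key _ _ hguc
              obtain ⟨hbv1, hfbv⟩ := key _ _ hgbv
              have huc2 : u.2 ≠ c.2 := fun h => huc (Prod.ext huc1 h)
              have hbv2 : b.2 ≠ v.2 := fun h => hbv (Prod.ext hbv1 h)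
              have hfub : f u.2 ≠ f b.2 := hf.1 h1.2
              have hfcv : f c.2 ≠ f v.2 := hf.1 h3.2
              set q : H.Walk u.2 v.2 := Walk.cons h1.2 (Walk.cons h2.2 (Walk.cons h3.2 Walk.nil))
              have hqp : q.IsPath := by
                rw [Walk.isPath_def]
                simp only [q, Walk.support_cons, Walk.support_nil, List.nodup_cons,
                  List.mem_cons, List.mem_singleton, List.not_mem_nil, or_false, not_or]
                refine ⟨⟨h1.2.ne, huc2, fun h => ?_⟩, ⟨h2.2.ne, hbv2⟩, h3.2.ne, by simp⟩
                exact hfcv (hfuc ▸ h ▸ rfl)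
              have h3c := hf.2 _ _ q hqp (by simp [q])
              have : (q.support.map f).toFinset ⊆ {f u.2, f b.2} := by
                intro a ha
                simp only [q, Walk.support_cons, Walk.support_nil, List.map_cons,
                  List.map_nil, List.mem_toFinset, List.mem_cons, List.not_mem_nil,
                  or_false] at ha
                simp only [Finset.mem_insert, Finset.mem_singleton]
                rcases ha with h|h|h|h
                · left; exact h
                · right; exact h
                · left; rw [h, ← hfuc]
                · right; rw [h, ← hfbv]
              have hle := Finset.card_le_card this
              have : ({f u.2, f b.2} : Finset (Fin n)).card ≤ 2 :=
                Finset.card_insert_le _ _ |>.trans (by simp)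
              omega
            · exact card_three_le (by simp) (by simp) (by simp) hgbc hgcv hgbv
          · exact card_three_le (by simp) (by simp) (by simp) hgub hgbc hguc

lemma swap_star {α β : Type*} {G : SimpleGraph α} {H : SimpleGraph β} {n : ℕ}
    {g : β × α → Fin n} (hg : (H.tensorProd G).IsStarColoring g) :
    (G.tensorProd H).IsStarColoring (g ∘ Prod.swap) := by
  have φadj : ∀ {x y : α × β}, (G.tensorProd H).Adj x y →
      (H.tensorProd G).Adj (Prod.swap x) (Prod.swap y) := fun h => ⟨h.2, h.1⟩
  set φ : G.tensorProd H →g H.tensorProd G := ⟨Prod.swap, φadj⟩ with hφ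
  constructor
  · intro u v h; exact hg.1 (φadj h)
  · intro u v p hp hl
    have hinj : Function.Injective φ := Prod.swap_injective
    have hmp : (p.map φ).IsPath := Walk.map_isPath_of_injective hinj hp
    have := hg.2 _ _ (p.map φ) hmp (by rw [Walk.length_map]; exact hl)
    rwa [Walk.support_map, List.map_map] at this


theorem starChromaticNumber_tensorProd_le
    {α β : Type*} [Fintype α] [Fintype β] (G : SimpleGraph α) (H : SimpleGraph β)
    (hG : G.Connected) (hH : H.Connected) :
    (G.tensorProd H).starChromaticNumber ≤
      min (Fintype.card α * H.starChromaticNumber) (Fintype.card β * G.starChromaticNumber) := by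
  have hHne : {n : ℕ | ∃ f : β → Fin n, H.IsStarColoring f}.Nonempty :=
    ⟨Fintype.card β, Fintype.equivFin β, isStarColoring_of_injective _ _ (Equiv.injective _)⟩
  have hGne : {n : ℕ | ∃ f : α → Fin n, G.IsStarColoring f}.Nonempty :=
    ⟨Fintype.card α, Fintype.equivFin α, isStarColoring_of_injective _ _ (Equiv.injective _)⟩
  obtain ⟨fH, hfH⟩ := Nat.sInf_mem hHne
  obtain ⟨fG, hfG⟩ := Nat.sInf_mem hGne
  refine le_min ?_ ?_
  · obtain ⟨g, hg⟩ := tensor_star_aux (G := G) hfH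
    exact Nat.sInf_le ⟨g, hg⟩
  · obtain ⟨g, hg⟩ := tensor_star_aux (G := H) hfG
    exact Nat.sInf_le ⟨g ∘ Prod.swap, swap_star hg⟩
end

section
/- For every integer m ≥ 3, the star chromatic number of the tensor product of the cycle C_m with the path P_2 satisfies χ_s(C_m × P_2) = 3. -/
open SimpleGraph

section NatLemmas

def col0 (i : ℕ) : ℕ := i % 3
def col1 (m i : ℕ) : ℕ := if i + 1 = m then 1 else i % 3
def col2 (m i a : ℕ) : ℕ :=
  if i + 4 < m then i % 3
  else if a = 0 then (if i + 4 = m then 1 else if i + 3 = m then 1 else 2)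
  else (if i + 4 = m then 2 else if i + 3 = m then 0 else if i + 2 = m then 0 else 1)

lemma col0_lt (i : ℕ) : col0 i < 3 := Nat.mod_lt _ (by omega)
lemma col1_lt (m i : ℕ) : col1 m i < 3 := by unfold col1; split_ifs <;> omega
lemma col2_lt (m i a : ℕ) : col2 m i a < 3 := by unfold col2; split_ifs <;> omega

lemma mod_helper (m k : ℕ) (h : k < m) : (m + k) % m = k := by
  rw [Nat.add_mod_left, Nat.mod_eq_of_lt h]

lemma col0_star (m i : ℕ) (h3 : m % 3 = 0) (hm : 3 ≤ m) (hi : i < m) :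
    ¬(col0 i = col0 ((i+2)%m) ∧ col0 ((i+1)%m) = col0 ((i+3)%m)) := by
  unfold col0
  rcases (show i + 3 < m ∨ i + 3 = m ∨ i + 2 = m ∨ i + 1 = m by omega) with h | h | h | h
  · rw [Nat.mod_eq_of_lt (show i+2 < m by omega), Nat.mod_eq_of_lt (show i+1 < m by omega),
      Nat.mod_eq_of_lt (show i+3 < m by omega)]
    omega
  · rw [Nat.mod_eq_of_lt (show i+2 < m by omega), Nat.mod_eq_of_lt (show i+1 < m by omega),
      h, Nat.mod_self]
    omega
  · rw [Nat.mod_eq_of_lt (show i+1 < m by omega), h, Nat.mod_self,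
      show i + 3 = m + 1 by omega, mod_helper m 1 (by omega)]
    omega
  · rw [h, Nat.mod_self, show i + 2 = m + 1 by omega, mod_helper m 1 (by omega),
      show i + 3 = m + 2 by omega, mod_helper m 2 (by omega)]
    omega

lemma col0_proper (m i : ℕ) (hm : 3 ≤ m) (hi : i < m) (h3 : m % 3 = 0) :
    col0 i ≠ col0 ((i+1)%m) := by
  unfold col0
  rcases (show i + 1 < m ∨ i + 1 = m by omega) with h | h
  · rw [Nat.mod_eq_of_lt h]; omega
  · rw [h, Nat.mod_self]; omega

lemma col1_star (m i : ℕ) (h3 : m % 3 = 1) (hm : 3 ≤ m) (hi : i < m) :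
    ¬(col1 m i = col1 m ((i+2)%m) ∧ col1 m ((i+1)%m) = col1 m ((i+3)%m)) := by
  rcases (show i + 3 < m ∨ i + 3 = m ∨ i + 2 = m ∨ i + 1 = m by omega) with h | h | h | h
  · rw [Nat.mod_eq_of_lt (show i+2 < m by omega), Nat.mod_eq_of_lt (show i+1 < m by omega),
      Nat.mod_eq_of_lt (show i+3 < m by omega)]
    unfold col1; split_ifs <;> first | omega | tauto
  · rw [Nat.mod_eq_of_lt (show i+2 < m by omega), Nat.mod_eq_of_lt (show i+1 < m by omega),
      h, Nat.mod_self]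
    unfold col1; split_ifs <;> first | omega | tauto
  · rw [Nat.mod_eq_of_lt (show i+1 < m by omega), h, Nat.mod_self,
      show i + 3 = m + 1 by omega, mod_helper m 1 (by omega)]
    unfold col1; split_ifs <;> first | omega | tauto
  · rw [h, Nat.mod_self, show i + 2 = m + 1 by omega, mod_helper m 1 (by omega),
      show i + 3 = m + 2 by omega, mod_helper m 2 (by omega)]
    unfold col1; split_ifs <;> first | omega | tauto

lemma col1_proper (m i : ℕ) (hm : 3 ≤ m) (hi : i < m) (h3 : m % 3 = 1) :
    col1 m i ≠ col1 m ((i+1)%m) := by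
  rcases (show i + 1 < m ∨ i + 1 = m by omega) with h | h
  · rw [Nat.mod_eq_of_lt h]; unfold col1; split_ifs <;> first | omega | tauto
  · rw [h, Nat.mod_self]; unfold col1; split_ifs <;> first | omega | tauto

lemma col2_base (m i a : ℕ) (h : i + 4 < m) : col2 m i a = i % 3 := by
  unfold col2; rw [if_pos h]
lemma col2_e4_0 (m i : ℕ) (h : i + 4 = m) : col2 m i 0 = 1 := by
  unfold col2; split_ifs <;> first | omega | tauto
lemma col2_e4_1 (m i : ℕ) (h : i + 4 = m) : col2 m i 1 = 2 := by
  unfold col2; split_ifs <;> first | omega | tauto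
lemma col2_e3_0 (m i : ℕ) (h : i + 3 = m) : col2 m i 0 = 1 := by
  unfold col2; split_ifs <;> first | omega | tauto
lemma col2_e3_1 (m i : ℕ) (h : i + 3 = m) : col2 m i 1 = 0 := by
  unfold col2; split_ifs <;> first | omega | tauto
lemma col2_e2_0 (m i : ℕ) (h : i + 2 = m) : col2 m i 0 = 2 := by
  unfold col2; split_ifs <;> first | omega | tauto
lemma col2_e2_1 (m i : ℕ) (h : i + 2 = m) : col2 m i 1 = 0 := by
  unfold col2; split_ifs <;> first | omega | tauto
lemma col2_e1_0 (m i : ℕ) (h : i + 1 = m) : col2 m i 0 = 2 := by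
  unfold col2; split_ifs <;> first | omega | tauto
lemma col2_e1_1 (m i : ℕ) (h : i + 1 = m) : col2 m i 1 = 1 := by
  unfold col2; split_ifs <;> first | omega | tauto

lemma col2_proper (m i a : ℕ) (hm : 3 ≤ m) (hi : i < m) (ha : a < 2) (h3 : m % 3 = 2) :
    col2 m i a ≠ col2 m ((i+1)%m) (1-a) := by
  have hm5 : 5 ≤ m := by omega
  rcases (show a = 0 ∨ a = 1 by omega) with rfl | rfl <;>
    simp only [Nat.sub_zero, Nat.sub_self] <;>
    rcases (show i + 5 < m ∨ i + 5 = m ∨ i + 4 = m ∨ i + 3 = m ∨ i + 2 = m ∨ i + 1 = m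
      by omega) with h | h | h | h | h | h
  · rw [Nat.mod_eq_of_lt (by omega), col2_base m i _ (by omega), col2_base m (i+1) _ (by omega)]
    omega
  · rw [Nat.mod_eq_of_lt (by omega), col2_base m i _ (by omega), col2_e4_1 m (i+1) (by omega)]
    omega
  · rw [Nat.mod_eq_of_lt (by omega), col2_e4_0 m i (by omega), col2_e3_1 m (i+1) (by omega)]
    omega
  · rw [Nat.mod_eq_of_lt (by omega), col2_e3_0 m i (by omega), col2_e2_1 m (i+1) (by omega)]
    omega
  · rw [Nat.mod_eq_of_lt (by omega), col2_e2_0 m i (by omega), col2_e1_1 m (i+1) (by omega)]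
    omega
  · rw [h, Nat.mod_self, col2_e1_0 m i (by omega), col2_base m 0 _ (by omega)]
    omega
  · rw [Nat.mod_eq_of_lt (by omega), col2_base m i _ (by omega), col2_base m (i+1) _ (by omega)]
    omega
  · rw [Nat.mod_eq_of_lt (by omega), col2_base m i _ (by omega), col2_e4_0 m (i+1) (by omega)]
    omega
  · rw [Nat.mod_eq_of_lt (by omega), col2_e4_1 m i (by omega), col2_e3_0 m (i+1) (by omega)]
    omega
  · rw [Nat.mod_eq_of_lt (by omega), col2_e3_1 m i (by omega), col2_e2_0 m (i+1) (by omega)]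
    omega
  · rw [Nat.mod_eq_of_lt (by omega), col2_e2_1 m i (by omega), col2_e1_0 m (i+1) (by omega)]
    omega
  · rw [h, Nat.mod_self, col2_e1_1 m i (by omega), col2_base m 0 _ (by omega)]
    omega

lemma col2_star (m i a : ℕ) (h3 : m % 3 = 2) (hm : 3 ≤ m) (hi : i < m) (ha : a < 2) :
    ¬(col2 m i a = col2 m ((i+2)%m) a ∧ col2 m ((i+1)%m) (1-a) = col2 m ((i+3)%m) (1-a)) := by
  rcases (show m = 5 ∨ 8 ≤ m by omega) with rfl | hm8
  · interval_cases i <;> interval_cases a <;> decide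
  rcases (show a = 0 ∨ a = 1 by omega) with rfl | rfl <;>
    simp only [Nat.sub_zero, Nat.sub_self] <;>
    rcases (show i+8 ≤ m ∨ i+7 = m ∨ i+6 = m ∨ i+5 = m ∨ i+4 = m ∨ i+3 = m ∨ i+2 = m ∨ i+1 = m
      by omega) with h|h|h|h|h|h|h|h
  -- a = 0
  · rw [Nat.mod_eq_of_lt (show i+2 < m by omega), Nat.mod_eq_of_lt (show i+1 < m by omega),
      Nat.mod_eq_of_lt (show i+3 < m by omega), col2_base m i _ (by omega),
      col2_base m (i+2) _ (by omega), col2_base m (i+1) _ (by omega),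
      col2_base m (i+3) _ (by omega)]
    omega
  · rw [Nat.mod_eq_of_lt (show i+2 < m by omega), Nat.mod_eq_of_lt (show i+1 < m by omega),
      Nat.mod_eq_of_lt (show i+3 < m by omega), col2_base m i _ (by omega),
      col2_base m (i+2) _ (by omega), col2_base m (i+1) _ (by omega),
      col2_e4_1 m (i+3) (by omega)]
    omega
  · rw [Nat.mod_eq_of_lt (show i+2 < m by omega), Nat.mod_eq_of_lt (show i+1 < m by omega),
      Nat.mod_eq_of_lt (show i+3 < m by omega), col2_base m i _ (by omega),
      col2_e4_0 m (i+2) (by omega), col2_base m (i+1) _ (by omega),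
      col2_e3_1 m (i+3) (by omega)]
    omega
  · rw [Nat.mod_eq_of_lt (show i+2 < m by omega), Nat.mod_eq_of_lt (show i+1 < m by omega),
      Nat.mod_eq_of_lt (show i+3 < m by omega), col2_base m i _ (by omega),
      col2_e3_0 m (i+2) (by omega), col2_e4_1 m (i+1) (by omega),
      col2_e2_1 m (i+3) (by omega)]
    omega
  · rw [Nat.mod_eq_of_lt (show i+2 < m by omega), Nat.mod_eq_of_lt (show i+1 < m by omega),
      Nat.mod_eq_of_lt (show i+3 < m by omega), col2_e4_0 m i (by omega),
      col2_e2_0 m (i+2) (by omega), col2_e3_1 m (i+1) (by omega),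
      col2_e1_1 m (i+3) (by omega)]
    omega
  · rw [Nat.mod_eq_of_lt (show i+2 < m by omega), Nat.mod_eq_of_lt (show i+1 < m by omega),
      h, Nat.mod_self, col2_e3_0 m i (by omega),
      col2_e1_0 m (i+2) (by omega), col2_e2_1 m (i+1) (by omega),
      col2_base m 0 _ (by omega)]
    omega
  · rw [Nat.mod_eq_of_lt (show i+1 < m by omega), h, Nat.mod_self,
      show i + 3 = m + 1 by omega, mod_helper m 1 (by omega), col2_e2_0 m i (by omega),
      col2_base m 0 _ (by omega), col2_e1_1 m (i+1) (by omega),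
      col2_base m 1 _ (by omega)]
    omega
  · rw [h, Nat.mod_self, show i + 2 = m + 1 by omega, mod_helper m 1 (by omega),
      show i + 3 = m + 2 by omega, mod_helper m 2 (by omega), col2_e1_0 m i (by omega),
      col2_base m 1 _ (by omega), col2_base m 0 _ (by omega),
      col2_base m 2 _ (by omega)]
    omega
  -- a = 1
  · rw [Nat.mod_eq_of_lt (show i+2 < m by omega), Nat.mod_eq_of_lt (show i+1 < m by omega),
      Nat.mod_eq_of_lt (show i+3 < m by omega), col2_base m i _ (by omega),
      col2_base m (i+2) _ (by omega), col2_base m (i+1) _ (by omega),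
      col2_base m (i+3) _ (by omega)]
    omega
  · rw [Nat.mod_eq_of_lt (show i+2 < m by omega), Nat.mod_eq_of_lt (show i+1 < m by omega),
      Nat.mod_eq_of_lt (show i+3 < m by omega), col2_base m i _ (by omega),
      col2_base m (i+2) _ (by omega), col2_base m (i+1) _ (by omega),
      col2_e4_0 m (i+3) (by omega)]
    omega
  · rw [Nat.mod_eq_of_lt (show i+2 < m by omega), Nat.mod_eq_of_lt (show i+1 < m by omega),
      Nat.mod_eq_of_lt (show i+3 < m by omega), col2_base m i _ (by omega),
      col2_e4_1 m (i+2) (by omega), col2_base m (i+1) _ (by omega),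
      col2_e3_0 m (i+3) (by omega)]
    omega
  · rw [Nat.mod_eq_of_lt (show i+2 < m by omega), Nat.mod_eq_of_lt (show i+1 < m by omega),
      Nat.mod_eq_of_lt (show i+3 < m by omega), col2_base m i _ (by omega),
      col2_e3_1 m (i+2) (by omega), col2_e4_0 m (i+1) (by omega),
      col2_e2_0 m (i+3) (by omega)]
    omega
  · rw [Nat.mod_eq_of_lt (show i+2 < m by omega), Nat.mod_eq_of_lt (show i+1 < m by omega),
      Nat.mod_eq_of_lt (show i+3 < m by omega), col2_e4_1 m i (by omega),
      col2_e2_1 m (i+2) (by omega), col2_e3_0 m (i+1) (by omega),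
      col2_e1_0 m (i+3) (by omega)]
    omega
  · rw [Nat.mod_eq_of_lt (show i+2 < m by omega), Nat.mod_eq_of_lt (show i+1 < m by omega),
      h, Nat.mod_self, col2_e3_1 m i (by omega),
      col2_e1_1 m (i+2) (by omega), col2_e2_0 m (i+1) (by omega),
      col2_base m 0 _ (by omega)]
    omega
  · rw [Nat.mod_eq_of_lt (show i+1 < m by omega), h, Nat.mod_self,
      show i + 3 = m + 1 by omega, mod_helper m 1 (by omega), col2_e2_1 m i (by omega),
      col2_base m 0 _ (by omega), col2_e1_0 m (i+1) (by omega),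
      col2_base m 1 _ (by omega)]
    omega
  · rw [h, Nat.mod_self, show i + 2 = m + 1 by omega, mod_helper m 1 (by omega),
      show i + 3 = m + 2 by omega, mod_helper m 2 (by omega), col2_e1_1 m i (by omega),
      col2_base m 1 _ (by omega), col2_base m 0 _ (by omega),
      col2_base m 2 _ (by omega)]
    omega

end NatLemmas

section Reduction

lemma card_aux {n : ℕ} (a b c : Fin n) (s : Finset (Fin n)) (ha : a ∈ s) (hb : b ∈ s)
    (hc : c ∈ s) (hab : a ≠ b) (hac : a ≠ c) (hbc : b ≠ c) : 3 ≤ s.card := by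
  have hsub : ({a, b, c} : Finset (Fin n)) ⊆ s := by
    intro x hx; simp only [Finset.mem_insert, Finset.mem_singleton] at hx
    rcases hx with rfl | rfl | rfl <;> assumption
  have h3 : ({a, b, c} : Finset (Fin n)).card = 3 := by
    rw [Finset.card_eq_three]; exact ⟨a, b, c, hab, hac, hbc, rfl⟩
  calc 3 = ({a, b, c} : Finset (Fin n)).card := h3.symm
    _ ≤ s.card := Finset.card_le_card hsub

lemma isStarColoring_of {α : Type*} (G : SimpleGraph α) {n : ℕ} (f : α → Fin n)
    (h1 : ∀ ⦃u v : α⦄, G.Adj u v → f u ≠ f v)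
    (h2 : ∀ x0 x1 x2 x3 : α, G.Adj x0 x1 → G.Adj x1 x2 → G.Adj x2 x3 → x0 ≠ x2 → x1 ≠ x3 →
      f x0 ≠ f x2 ∨ f x1 ≠ f x3) : G.IsStarColoring f := by
  refine ⟨h1, ?_⟩
  intro u v p hp hl
  cases p with
  | nil => simp at hl
  | @cons _ x1 _ ha1 q =>
    cases q with
    | nil => simp at hl
    | @cons _ x2 _ ha2 r =>
      cases r with
      | nil => simp at hl
      | @cons _ x3 _ ha3 s =>
        cases s with
        | cons ha4 t =>
          exfalso
          simp only [SimpleGraph.Walk.length_cons] at hl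
          omega
        | nil =>
          rw [SimpleGraph.Walk.isPath_def] at hp
          simp only [SimpleGraph.Walk.support_cons, SimpleGraph.Walk.support_nil] at hp ⊢
          have hu2 : u ≠ x2 := by
            intro h; subst h; simp at hp
          have h13 : x1 ≠ v := by
            intro h; subst h; simp at hp
          have hc1 := h1 ha1
          have hc2 := h1 ha2
          have hc3 := h1 ha3
          have hkey := h2 u x1 x2 v ha1 ha2 ha3 hu2 h13
          simp only [List.map_cons, List.map_nil, List.toFinset_cons, List.toFinset_nil,
            LawfulSingleton.insert_empty_eq]
          rcases hkey with h | h
          · exact card_aux (f u) (f x1) (f x2) _ (by simp) (by simp) (by simp) hc1 h hc2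
          · exact card_aux (f x1) (f x2) (f v) _ (by simp) (by simp) (by simp) hc2 h hc3

end Reduction

section FinLemmas

lemma cyc_succ {k : ℕ} (u v : Fin (k+3)) (h : (cycleGraph (k+3)).Adj u v) :
    v = u + 1 ∨ u = v + 1 := by
  rw [SimpleGraph.cycleGraph_adj'] at h
  rcases h with h | h
  · exact Or.inr (sub_eq_iff_eq_add'.mp (Fin.ext (h.trans (Fin.val_one (k+2)).symm)))
  · exact Or.inl (sub_eq_iff_eq_add'.mp (Fin.ext (h.trans (Fin.val_one (k+2)).symm)))

lemma val_succ {k : ℕ} (i : Fin (k+3)) : (i + 1).val = (i.val + 1) % (k+3) := by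
  rw [Fin.val_add, Fin.val_one]

lemma val_succ2 {k : ℕ} (i : Fin (k+3)) : (i + 1 + 1).val = (i.val + 2) % (k+3) := by
  rw [val_succ, val_succ, Nat.mod_add_mod]

lemma val_succ3 {k : ℕ} (i : Fin (k+3)) : (i + 1 + 1 + 1).val = (i.val + 3) % (k+3) := by
  rw [val_succ, val_succ2, Nat.mod_add_mod]

lemma path2_adj (a b : Fin 2) (h : (pathGraph 2).Adj a b) : b.val = 1 - a.val := by
  rw [SimpleGraph.pathGraph_adj] at h
  have := a.isLt; have := b.isLt
  omega

lemma path01 : (pathGraph 2).Adj 0 1 := by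
  rw [SimpleGraph.pathGraph_adj]; simp

lemma path10 : (pathGraph 2).Adj 1 0 := path01.symm

lemma cyc_adj_succ' {k : ℕ} (i j : Fin (k+3)) (h : j.val = (i.val + 1) % (k+3)) :
    (cycleGraph (k+3)).Adj i j := by
  rw [SimpleGraph.cycleGraph_adj']
  right
  rw [Fin.sub_def]
  simp only
  have hi := i.isLt
  rcases (show i.val + 1 < k+3 ∨ i.val + 1 = k + 3 by omega) with h' | h'
  · rw [Nat.mod_eq_of_lt h'] at h
    rw [h, show (k+3) - i.val + (i.val+1) = (k+3) + 1 by omega, mod_helper _ _ (by omega)]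
  · rw [h', Nat.mod_self] at h
    rw [h, show (k+3) - i.val + 0 = 1 by omega, Nat.mod_eq_of_lt (by omega)]

end FinLemmas

lemma mem_aux (k : ℕ) (c : ℕ → ℕ → ℕ) (hlt : ∀ i a, c i a < 3)
    (hproper : ∀ i a, i < k+3 → a < 2 → c i a ≠ c ((i+1)%(k+3)) (1-a))
    (hstar : ∀ i a, i < k+3 → a < 2 →
      ¬(c i a = c ((i+2)%(k+3)) a ∧ c ((i+1)%(k+3)) (1-a) = c ((i+3)%(k+3)) (1-a))) :
    ∃ f : Fin (k+3) × Fin 2 → Fin 3,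
      ((cycleGraph (k+3)).tensorProd (pathGraph 2)).IsStarColoring f := by
  refine ⟨fun x => ⟨c x.1.val x.2.val, hlt _ _⟩, isStarColoring_of _ _ ?_ ?_⟩
  · rintro ⟨i, a⟩ ⟨j, b⟩ ⟨hc, hp⟩
    simp only [ne_eq, Fin.mk.injEq]
    have hab := path2_adj a b hp
    have hba := path2_adj b a hp.symm
    rcases cyc_succ i j hc with rfl | rfl
    · rw [val_succ, hab]
      exact hproper _ _ i.isLt a.isLt
    · rw [val_succ, hba]
      exact fun hh => hproper _ _ j.isLt b.isLt hh.symm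
  · rintro ⟨i0, a0⟩ ⟨i1, a1⟩ ⟨i2, a2⟩ ⟨i3, a3⟩ ⟨hc1, hp1⟩ ⟨hc2, hp2⟩ ⟨hc3, hp3⟩ ne02 ne13
    have h01 := path2_adj a0 a1 hp1
    have h12 := path2_adj a1 a2 hp2
    have h23 := path2_adj a2 a3 hp3
    have ha0 := a0.isLt
    have ha1 := a1.isLt
    obtain rfl : a0 = a2 := Fin.ext (by omega)
    obtain rfl : a1 = a3 := Fin.ext (by omega)
    have hi02 : i0 ≠ i2 := by
      intro h; exact ne02 (by rw [h])
    have hi13 : i1 ≠ i3 := by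
      intro h; exact ne13 (by rw [h])
    by_contra hcon
    push_neg at hcon
    obtain ⟨he02, he13⟩ := hcon
    simp only [Fin.mk.injEq] at he02 he13
    rcases cyc_succ i0 i1 hc1 with rfl | rfl
    · -- forward chain
      rcases cyc_succ (i0+1) i2 hc2 with rfl | hbad
      · rcases cyc_succ (i0+1+1) i3 hc3 with rfl | hbad2
        · refine hstar i0.val a0.val i0.isLt ha0 ⟨?_, ?_⟩
          · rw [← val_succ2]; exact he02
          · rw [← h01, ← val_succ, ← val_succ3]; exact he13
        · exact absurd (add_right_cancel hbad2) hi13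
      · exact absurd (add_right_cancel hbad) hi02
    · -- backward chain
      rcases cyc_succ i1 i2 hc2 with hbad | rfl
      · exact absurd hbad.symm hi02
      · rcases cyc_succ i2 i3 hc3 with hbad2 | rfl
        · exact absurd hbad2.symm hi13
        · refine hstar i3.val a1.val i3.isLt ha1 ⟨?_, ?_⟩
          · rw [← val_succ2]; exact he13.symm
          · rw [← h12, ← val_succ, ← val_succ3]; exact he02.symm

theorem starChromaticNumber_Cm_tensorProd_P2 (m : ℕ) (hm : 3 ≤ m) :
    ((cycleGraph m).tensorProd (pathGraph 2)).starChromaticNumber = 3 := by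
  obtain ⟨k, rfl⟩ : ∃ k, m = k + 3 := ⟨m - 3, by omega⟩
  have hmem : 3 ∈ {n : ℕ | ∃ f : Fin (k+3) × Fin 2 → Fin 3,
      ((cycleGraph (k+3)).tensorProd (pathGraph 2)).IsStarColoring f} := by
    rcases (show (k+3) % 3 = 0 ∨ (k+3) % 3 = 1 ∨ (k+3) % 3 = 2 by omega) with h | h | h
    · exact mem_aux k (fun i _ => col0 i) (fun i _ => col0_lt i)
        (fun i a hi ha => col0_proper (k+3) i (by omega) hi h)
        (fun i a hi ha => col0_star (k+3) i h (by omega) hi)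
    · exact mem_aux k (fun i _ => col1 (k+3) i) (fun i _ => col1_lt (k+3) i)
        (fun i a hi ha => col1_proper (k+3) i (by omega) hi h)
        (fun i a hi ha => col1_star (k+3) i h (by omega) hi)
    · exact mem_aux k (col2 (k+3)) (fun i a => col2_lt (k+3) i a)
        (fun i a hi ha => col2_proper (k+3) i a (by omega) hi ha h)
        (fun i a hi ha => col2_star (k+3) i a h (by omega) hi ha)
  have hlow : ∀ n : ℕ, (∃ f : Fin (k+3) × Fin 2 → Fin n,
      ((cycleGraph (k+3)).tensorProd (pathGraph 2)).IsStarColoring f) → 3 ≤ n := by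
    intro n hn
    obtain ⟨f, hfp, hfs⟩ := hn
    rcases Nat.eq_zero_or_pos k with rfl | hk
    · -- k = 0, m = 3
      have e1 : ((cycleGraph 3).tensorProd (pathGraph 2)).Adj (0, 0) (1, 1) :=
        ⟨by decide, path01⟩
      have e2 : ((cycleGraph 3).tensorProd (pathGraph 2)).Adj (1, 1) (2, 0) :=
        ⟨by decide, path10⟩
      have e3 : ((cycleGraph 3).tensorProd (pathGraph 2)).Adj (2, 0) (0, 1) :=
        ⟨by decide, path01⟩
      let w : ((cycleGraph 3).tensorProd (pathGraph 2)).Walk (0, 0) (0, 1) :=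
        SimpleGraph.Walk.cons e1 (SimpleGraph.Walk.cons e2 (SimpleGraph.Walk.cons e3
          SimpleGraph.Walk.nil))
      have hpath : w.IsPath := by
        rw [SimpleGraph.Walk.isPath_def]
        show ([((0 : Fin 3), (0 : Fin 2)), (1, 1), (2, 0), (0, 1)]).Nodup
        decide
      have h1 := hfs _ _ w hpath rfl
      have h2 : ((w.support.map f).toFinset).card ≤ n := by
        refine le_trans (Finset.card_le_univ _) ?_
        simp
      omega
    · -- k ≥ 1
      have e1 : ((cycleGraph (k+3)).tensorProd (pathGraph 2)).Adj
          (⟨0, by omega⟩, 0) (⟨1, by omega⟩, 1) :=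
        ⟨cyc_adj_succ' _ _ (Nat.mod_eq_of_lt (by omega)).symm, path01⟩
      have e2 : ((cycleGraph (k+3)).tensorProd (pathGraph 2)).Adj
          (⟨1, by omega⟩, 1) (⟨2, by omega⟩, 0) :=
        ⟨cyc_adj_succ' _ _ (Nat.mod_eq_of_lt (by omega)).symm, path10⟩
      have e3 : ((cycleGraph (k+3)).tensorProd (pathGraph 2)).Adj
          (⟨2, by omega⟩, 0) (⟨3, by omega⟩, 1) :=
        ⟨cyc_adj_succ' _ _ (Nat.mod_eq_of_lt (by omega)).symm, path01⟩
      let w : ((cycleGraph (k+3)).tensorProd (pathGraph 2)).Walk (⟨0, by omega⟩, 0) (⟨3, by omega⟩, 1) :=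
        SimpleGraph.Walk.cons e1 (SimpleGraph.Walk.cons e2 (SimpleGraph.Walk.cons e3
          SimpleGraph.Walk.nil))
      have hpath : w.IsPath := by
        rw [SimpleGraph.Walk.isPath_def]
        show ([((⟨0, by omega⟩ : Fin (k+3)), (0 : Fin 2)), (⟨1, by omega⟩, 1),
          (⟨2, by omega⟩, 0), (⟨3, by omega⟩, 1)]).Nodup
        simp [Prod.ext_iff, Fin.ext_iff]
      have h1 := hfs _ _ w hpath rfl
      have h2 : ((w.support.map f).toFinset).card ≤ n := by
        refine le_trans (Finset.card_le_univ _) ?_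
        simp
      omega
  apply le_antisymm
  · exact Nat.sInf_le hmem
  · exact le_csInf ⟨3, hmem⟩ hlow
end
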